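/- arXiv:2503.24004 — 2 statements merged into one kernel-verified Lean document; each statement's English description precedes it below -/
import Mathlib

section
/- Let (P₁,…,P_J) be a multivariate species sampling process with non-atomic base measure P₀, and let X be a sample from (P₁,…,P_J). Then for every j ∈ {1,…,J} and every Borel set A ⊆ 𝕏: E[P_j(A)] = P₀(A), and Var[P_j(A)] = ℙ(X_{j,1} = X_{j,2}) · P₀(A) · (1 − P₀(A)). -/
open MeasureTheory ProbabilityTheory
open scoped ENNReal

namespace MSSP

variable {Ω : Type*} [MeasurableSpace Ω] {𝕏 : Type*} [MeasurableSpace 𝕏]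

/-- The species-sampling mixture measure `∑ₕ wₕ δ_{aₕ} + (1 - ∑ₕ wₕ) P₀`. -/
noncomputable def mixM (P₀ : Measure 𝕏) (w : ℕ → ℝ) (a : ℕ → 𝕏) : Measure 𝕏 :=
  Measure.sum (fun h => ENNReal.ofReal (w h) • Measure.dirac (a h)) +
    ENNReal.ofReal (1 - ∑' h, w h) • P₀

/-- `(P j)_{j}` is a multivariate species sampling process with base measure `P₀`,
weight array `π` and atoms `θ`. -/
structure IsMSSPwith {ι : Type*} (Pr : Measure Ω) (P₀ : Measure 𝕏)
    (P : ι → Ω → Measure 𝕏) (π : ι → ℕ → Ω → ℝ) (θ : ℕ → Ω → 𝕏) : Prop where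
  measP : ∀ j (A : Set 𝕏), MeasurableSet A → Measurable fun ω => P j ω A
  probP : ∀ j ω, IsProbabilityMeasure (P j ω)
  measπ : ∀ j h, Measurable (π j h)
  subprob : ∀ j, ∀ᵐ ω ∂Pr, (∀ h, 0 ≤ π j h ω ∧ π j h ω ≤ 1) ∧ ∑' h, π j h ω ≤ 1
  measθ : ∀ h, Measurable (θ h)
  lawθ : ∀ h, Measure.map (θ h) Pr = P₀
  iidθ : iIndepFun (m := fun _ : ℕ => ‹MeasurableSpace 𝕏›) θ Pr
  indepθπ : IndepFun (fun ω (h : ℕ) => θ h ω) (fun ω (j : ι) (h : ℕ) => π j h ω) Pr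
  repr : ∀ j, ∀ᵐ ω ∂Pr, P j ω = mixM P₀ (fun h => π j h ω) (fun h => θ h ω)

/-- `(P j)_j` is a multivariate species sampling process with base measure `P₀`. -/
def IsMSSP {ι : Type*} (Pr : Measure Ω) (P₀ : Measure 𝕏)
    (P : ι → Ω → Measure 𝕏) : Prop :=
  ∃ π θ, IsMSSPwith Pr P₀ P π θ

/-- `X` is a sample from the vector of random probability measures `P`:
conditionally on `P` the entries are independent, with `X j i` distributed as `P j`. -/
def IsSample {ι : Type*} (Pr : Measure Ω) (P : ι → Ω → Measure 𝕏)
    (X : ι → ℕ → Ω → 𝕏) : Prop :=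
  (∀ j i, Measurable (X j i)) ∧
  ∀ (s : Finset (ι × ℕ)) (A : ι × ℕ → Set 𝕏), (∀ p ∈ s, MeasurableSet (A p)) →
    Pr {ω | ∀ p ∈ s, X p.1 p.2 ω ∈ A p} = ∫⁻ ω, ∏ p ∈ s, P p.1 ω (A p) ∂Pr

/-- Covariance of two real random variables. -/
noncomputable def covR (Pr : Measure Ω) (f g : Ω → ℝ) : ℝ :=
  ∫ ω, f ω * g ω ∂Pr - (∫ ω, f ω ∂Pr) * (∫ ω, g ω ∂Pr)

/-- Correlation of two real random variables. -/
noncomputable def corrR (Pr : Measure Ω) (f g : Ω → ℝ) : ℝ :=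
  covR Pr f g / (Real.sqrt (variance f Pr) * Real.sqrt (variance g Pr))

lemma mixM_apply (P₀ : Measure 𝕏) (w : ℕ → ℝ) (a : ℕ → 𝕏) {B : Set 𝕏}
    (hB : MeasurableSet B) :
    mixM P₀ w a B = (∑' h, ENNReal.ofReal (w h) * B.indicator (fun _ => (1:ℝ≥0∞)) (a h)) +
      ENNReal.ofReal (1 - ∑' h, w h) * P₀ B := by
  rw [mixM, Measure.add_apply, Measure.sum_apply _ hB, Measure.smul_apply, smul_eq_mul]
  congr 1
  refine tsum_congr fun h => ?_
  rw [Measure.smul_apply, smul_eq_mul, Measure.dirac_apply' _ hB]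
  rfl

lemma pair_law {ι : Type*} (Pr : Measure Ω) [IsProbabilityMeasure Pr]
    (P : ι → Ω → Measure 𝕏)
    (measP : ∀ j (A : Set 𝕏), MeasurableSet A → Measurable fun ω => P j ω A)
    (probP : ∀ j ω, IsProbabilityMeasure (P j ω))
    (X : ι → ℕ → Ω → 𝕏) (hX : IsSample Pr P X) (j : ι) {S : Set (𝕏 × 𝕏)}
    (hS : MeasurableSet S) :
    Measurable (fun ω => ((P j ω).prod (P j ω)) S) ∧
    Pr ((fun ω => (X j 0 ω, X j 1 ω)) ⁻¹' S) = ∫⁻ ω, ((P j ω).prod (P j ω)) S ∂Pr := by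
  classical
  haveI : ∀ ω, SFinite (P j ω) := fun ω => haveI := probP j ω; inferInstance
  have hXm : Measurable fun ω => (X j 0 ω, X j 1 ω) := (hX.1 j 0).prodMk (hX.1 j 1)
  refine MeasurableSpace.induction_on_inter (C := fun S _ =>
      Measurable (fun ω => ((P j ω).prod (P j ω)) S) ∧
      Pr ((fun ω => (X j 0 ω, X j 1 ω)) ⁻¹' S) = ∫⁻ ω, ((P j ω).prod (P j ω)) S ∂Pr)
    generateFrom_prod.symm isPiSystem_prod ?_ ?_ ?_ ?_ _ hS
  · simp
  · rintro t ⟨B1, hB1, B2, hB2, rfl⟩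
    simp only [Set.mem_setOf_eq] at hB1 hB2
    have hmeas : Measurable (fun ω => ((P j ω).prod (P j ω)) (B1 ×ˢ B2)) := by
      simp only [Measure.prod_prod]
      exact (measP j B1 hB1).mul (measP j B2 hB2)
    refine ⟨hmeas, ?_⟩
    set A' : ι × ℕ → Set 𝕏 := fun p => if p.2 = 0 then B1 else B2 with hA'
    have hne : ((j, 0) : ι × ℕ) ≠ (j, 1) := by simp
    have h2 := hX.2 {(j, 0), (j, 1)} A' (by
      intro p hp
      by_cases h : p.2 = 0
      · simpa [A', h] using hB1
      · simpa [A', h] using hB2)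
    have hset : {ω | ∀ p ∈ ({(j, 0), (j, 1)} : Finset (ι × ℕ)), X p.1 p.2 ω ∈ A' p}
        = (fun ω => (X j 0 ω, X j 1 ω)) ⁻¹' (B1 ×ˢ B2) := by
      ext ω
      simp [A', Set.mem_prod]
    rw [hset] at h2
    rw [h2]
    refine lintegral_congr fun ω => ?_
    rw [Finset.prod_pair hne, Measure.prod_prod]
    simp [A']
  · rintro t ht ⟨hm, he⟩
    have hc : ∀ ω, ((P j ω).prod (P j ω)) tᶜ = 1 - ((P j ω).prod (P j ω)) t := by
      intro ω
      haveI := probP j ω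
      exact prob_compl_eq_one_sub ht
    have hle : ∀ ω, ((P j ω).prod (P j ω)) t ≤ 1 := by
      intro ω; haveI := probP j ω; exact prob_le_one
    have hfin : ∫⁻ ω, ((P j ω).prod (P j ω)) t ∂Pr ≠ ∞ := by
      refine ne_top_of_le_ne_top (by simp : (1 : ℝ≥0∞) ≠ ∞) ?_
      calc ∫⁻ ω, ((P j ω).prod (P j ω)) t ∂Pr ≤ ∫⁻ _, 1 ∂Pr := lintegral_mono hle
        _ = 1 := by simp
    constructor
    · simp only [hc]
      exact measurable_const.sub hm
    · rw [Set.preimage_compl, prob_compl_eq_one_sub (hXm ht), he]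
      simp only [hc]
      rw [lintegral_sub hm hfin (ae_of_all _ hle)]
      simp
  · intro f hdisj hfm hC
    have hiu : ∀ ω, ((P j ω).prod (P j ω)) (⋃ i, f i) = ∑' i, ((P j ω).prod (P j ω)) (f i) :=
      fun ω => measure_iUnion hdisj hfm
    have hm : Measurable (fun ω => ((P j ω).prod (P j ω)) (⋃ i, f i)) := by
      simp only [hiu]
      exact Measurable.ennreal_tsum fun i => (hC i).1
    refine ⟨hm, ?_⟩
    rw [Set.preimage_iUnion,
      measure_iUnion (fun a b hab => (hdisj hab).preimage _) (fun i => hXm (hfm i))]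
    simp only [hiu]
    rw [lintegral_tsum fun i => ((hC i).1).aemeasurable]
    exact tsum_congr fun i => (hC i).2

lemma second_moment {Ω : Type*} [MeasurableSpace Ω] (Pr : Measure Ω) [IsProbabilityMeasure Pr]
    (W : ℕ → Ω → ℝ≥0∞) (R : Ω → ℝ≥0∞) (D : ℕ → Ω → ℝ≥0∞) (p : ℝ≥0∞)
    (mW : ∀ h, Measurable (W h)) (mR : Measurable R) (mD : ∀ h, Measurable (D h))
    (hpp : p * p ≤ p)
    (hDW : ∀ h k, ∫⁻ ω, (D h ω * D k ω) * (W h ω * W k ω) ∂Pr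
        = (if h = k then p else p * p) * ∫⁻ ω, W h ω * W k ω ∂Pr)
    (hDWR : ∀ h, ∫⁻ ω, D h ω * (W h ω * R ω) ∂Pr = p * ∫⁻ ω, W h ω * R ω ∂Pr)
    (hnorm : ∀ᵐ ω ∂Pr, (∑' h, W h ω) + R ω = 1) :
    ∫⁻ ω, ((∑' h, W h ω * D h ω) + R ω * p) * ((∑' h, W h ω * D h ω) + R ω * p) ∂Pr
      = p * p + (p - p * p) * ∑' h, ∫⁻ ω, W h ω * W h ω ∂Pr := by
  have mS : Measurable fun ω => ∑' h, W h ω * D h ω :=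
    Measurable.ennreal_tsum fun h => (mW h).mul (mD h)
  have mSW : Measurable fun ω => ∑' h, W h ω := Measurable.ennreal_tsum mW
  have mc : Measurable fun ω => R ω * p := mR.mul_const p
  -- split into four integrals
  have hsplit : ∫⁻ ω, ((∑' h, W h ω * D h ω) + R ω * p)
        * ((∑' h, W h ω * D h ω) + R ω * p) ∂Pr
      = (∫⁻ ω, (∑' h, W h ω * D h ω) * (∑' h, W h ω * D h ω) ∂Pr)
        + ((∫⁻ ω, (∑' h, W h ω * D h ω) * (R ω * p) ∂Pr)
          + ((∫⁻ ω, (R ω * p) * (∑' h, W h ω * D h ω) ∂Pr)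
            + ∫⁻ ω, (R ω * p) * (R ω * p) ∂Pr)) := by
    calc ∫⁻ ω, ((∑' h, W h ω * D h ω) + R ω * p)
          * ((∑' h, W h ω * D h ω) + R ω * p) ∂Pr
        = ∫⁻ ω, (∑' h, W h ω * D h ω) * (∑' h, W h ω * D h ω)
            + ((∑' h, W h ω * D h ω) * (R ω * p)
              + ((R ω * p) * (∑' h, W h ω * D h ω)
                + (R ω * p) * (R ω * p))) ∂Pr := lintegral_congr fun ω => by ring
      _ = _ := by
          rw [lintegral_add_left (mS.fun_mul mS), lintegral_add_left (mS.fun_mul mc),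
            lintegral_add_left (mc.fun_mul mS)]
  -- first integral
  have hI1 : ∫⁻ ω, (∑' h, W h ω * D h ω) * (∑' h, W h ω * D h ω) ∂Pr
      = p * p * (∑' h, ∑' k, ∫⁻ ω, W h ω * W k ω ∂Pr)
        + (p - p * p) * ∑' h, ∫⁻ ω, W h ω * W h ω ∂Pr := by
    have hpt : ∀ ω, (∑' h, W h ω * D h ω) * (∑' h, W h ω * D h ω)
        = ∑' h, ∑' k, (W h ω * D h ω) * (W k ω * D k ω) := by
      intro ω
      rw [← ENNReal.tsum_mul_right]
      exact tsum_congr fun h => (ENNReal.tsum_mul_left).symm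
    have h1 : ∫⁻ ω, (∑' h, W h ω * D h ω) * (∑' h, W h ω * D h ω) ∂Pr
        = ∑' h, ∑' k, (if h = k then p else p * p) * ∫⁻ ω, W h ω * W k ω ∂Pr := by
      rw [lintegral_congr hpt, lintegral_tsum (fun h => (Measurable.ennreal_tsum fun k =>
        ((mW h).fun_mul (mD h)).fun_mul ((mW k).fun_mul (mD k))).aemeasurable)]
      refine tsum_congr fun h => ?_
      rw [lintegral_tsum (fun k => (((mW h).fun_mul (mD h)).fun_mul ((mW k).fun_mul (mD k))).aemeasurable)]
      refine tsum_congr fun k => ?_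
      calc ∫⁻ ω, (W h ω * D h ω) * (W k ω * D k ω) ∂Pr
          = ∫⁻ ω, (D h ω * D k ω) * (W h ω * W k ω) ∂Pr := lintegral_congr fun ω => by ring
        _ = (if h = k then p else p * p) * ∫⁻ ω, W h ω * W k ω ∂Pr := hDW h k
    rw [h1]
    have h2 : ∀ h, ∑' k, (if h = k then p else p * p) * ∫⁻ ω, W h ω * W k ω ∂Pr
        = p * p * (∑' k, ∫⁻ ω, W h ω * W k ω ∂Pr)
          + (p - p * p) * ∫⁻ ω, W h ω * W h ω ∂Pr := by
      intro h
      have hterm : ∀ k, (if h = k then p else p * p) * ∫⁻ ω, W h ω * W k ω ∂Pr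
          = p * p * ∫⁻ ω, W h ω * W k ω ∂Pr
            + (if k = h then (p - p * p) * ∫⁻ ω, W h ω * W h ω ∂Pr else 0) := by
        intro k
        by_cases hk : k = h
        · subst hk
          simp only [eq_self_iff_true, if_true]
          rw [← add_mul, add_tsub_cancel_of_le hpp]
        · rw [if_neg (fun e => hk e.symm), if_neg hk, add_zero]
      rw [tsum_congr hterm, ENNReal.tsum_add, ENNReal.tsum_mul_left, tsum_ite_eq]
    rw [tsum_congr h2, ENNReal.tsum_add, ENNReal.tsum_mul_left, ENNReal.tsum_mul_left]
  -- second integral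
  have hI2 : ∫⁻ ω, (∑' h, W h ω * D h ω) * (R ω * p) ∂Pr
      = p * p * ∑' h, ∫⁻ ω, W h ω * R ω ∂Pr := by
    have hpt : ∀ ω, (∑' h, W h ω * D h ω) * (R ω * p)
        = ∑' h, (W h ω * D h ω) * (R ω * p) := fun ω => (ENNReal.tsum_mul_right).symm
    rw [lintegral_congr hpt, lintegral_tsum (fun h =>
      (((mW h).fun_mul (mD h)).fun_mul mc).aemeasurable)]
    have hterm : ∀ h, ∫⁻ ω, (W h ω * D h ω) * (R ω * p) ∂Pr
        = p * p * ∫⁻ ω, W h ω * R ω ∂Pr := by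
      intro h
      calc ∫⁻ ω, (W h ω * D h ω) * (R ω * p) ∂Pr
          = ∫⁻ ω, (D h ω * (W h ω * R ω)) * p ∂Pr := lintegral_congr fun ω => by ring
        _ = (∫⁻ ω, D h ω * (W h ω * R ω) ∂Pr) * p :=
            lintegral_mul_const p ((mD h).mul ((mW h).mul mR))
        _ = (p * ∫⁻ ω, W h ω * R ω ∂Pr) * p := by rw [hDWR h]
        _ = p * p * ∫⁻ ω, W h ω * R ω ∂Pr := by ring
    rw [tsum_congr hterm, ENNReal.tsum_mul_left]
  -- third integral
  have hI3 : ∫⁻ ω, (R ω * p) * (∑' h, W h ω * D h ω) ∂Pr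
      = p * p * ∑' h, ∫⁻ ω, W h ω * R ω ∂Pr := by
    rw [lintegral_congr fun ω => mul_comm ((R ω) * p) (∑' h, W h ω * D h ω)]
    exact hI2
  -- fourth integral
  have hI4 : ∫⁻ ω, (R ω * p) * (R ω * p) ∂Pr = p * p * ∫⁻ ω, R ω * R ω ∂Pr := by
    calc ∫⁻ ω, (R ω * p) * (R ω * p) ∂Pr
        = ∫⁻ ω, (R ω * R ω) * (p * p) ∂Pr := lintegral_congr fun ω => by ring
      _ = (∫⁻ ω, R ω * R ω ∂Pr) * (p * p) := lintegral_mul_const _ (mR.mul mR)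
      _ = p * p * ∫⁻ ω, R ω * R ω ∂Pr := mul_comm _ _
  -- total mass identity
  have hTUV : (∑' h, ∑' k, ∫⁻ ω, W h ω * W k ω ∂Pr)
      + ((∑' h, ∫⁻ ω, W h ω * R ω ∂Pr)
        + ((∑' h, ∫⁻ ω, W h ω * R ω ∂Pr) + ∫⁻ ω, R ω * R ω ∂Pr)) = 1 := by
    have e1 : ∫⁻ ω, ((∑' h, W h ω) + R ω) * ((∑' h, W h ω) + R ω) ∂Pr = 1 := by
      have e0 : (fun ω => ((∑' h, W h ω) + R ω) * ((∑' h, W h ω) + R ω))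
          =ᵐ[Pr] (fun _ => (1 : ℝ≥0∞)) := by
        filter_upwards [hnorm] with ω hω
        rw [hω, one_mul]
      rw [lintegral_congr_ae e0, lintegral_one, measure_univ]
    have ha : ∫⁻ ω, (∑' h, W h ω) * (∑' h, W h ω) ∂Pr
        = ∑' h, ∑' k, ∫⁻ ω, W h ω * W k ω ∂Pr := by
      have hpt : ∀ ω, (∑' h, W h ω) * (∑' h, W h ω) = ∑' h, ∑' k, W h ω * W k ω := by
        intro ω
        rw [← ENNReal.tsum_mul_right]
        exact tsum_congr fun h => (ENNReal.tsum_mul_left).symm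
      rw [lintegral_congr hpt, lintegral_tsum (fun h => (Measurable.ennreal_tsum fun k =>
        (mW h).fun_mul (mW k)).aemeasurable)]
      exact tsum_congr fun h =>
        lintegral_tsum (fun k => ((mW h).mul (mW k)).aemeasurable)
    have hb : ∫⁻ ω, (∑' h, W h ω) * R ω ∂Pr = ∑' h, ∫⁻ ω, W h ω * R ω ∂Pr := by
      have hpt : ∀ ω, (∑' h, W h ω) * R ω = ∑' h, W h ω * R ω :=
        fun ω => (ENNReal.tsum_mul_right).symm
      rw [lintegral_congr hpt]
      exact lintegral_tsum fun h => ((mW h).mul mR).aemeasurable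
    have hc : ∫⁻ ω, R ω * (∑' h, W h ω) ∂Pr = ∑' h, ∫⁻ ω, W h ω * R ω ∂Pr := by
      rw [lintegral_congr fun ω => mul_comm (R ω) (∑' h, W h ω)]
      exact hb
    calc (∑' h, ∑' k, ∫⁻ ω, W h ω * W k ω ∂Pr)
          + ((∑' h, ∫⁻ ω, W h ω * R ω ∂Pr)
            + ((∑' h, ∫⁻ ω, W h ω * R ω ∂Pr) + ∫⁻ ω, R ω * R ω ∂Pr))
        = (∫⁻ ω, (∑' h, W h ω) * (∑' h, W h ω) ∂Pr)
          + ((∫⁻ ω, (∑' h, W h ω) * R ω ∂Pr)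
            + ((∫⁻ ω, R ω * (∑' h, W h ω) ∂Pr) + ∫⁻ ω, R ω * R ω ∂Pr)) := by
          rw [ha, hb, hc]
      _ = ∫⁻ ω, ((∑' h, W h ω) + R ω) * ((∑' h, W h ω) + R ω) ∂Pr := by
          rw [← lintegral_add_left (mR.fun_mul mSW), ← lintegral_add_left (mSW.fun_mul mR),
            ← lintegral_add_left (mSW.fun_mul mSW)]
          exact lintegral_congr fun ω => by ring
      _ = 1 := e1
  rw [hsplit, hI1, hI2, hI3, hI4]
  calc p * p * (∑' h, ∑' k, ∫⁻ ω, W h ω * W k ω ∂Pr)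
        + (p - p * p) * (∑' h, ∫⁻ ω, W h ω * W h ω ∂Pr)
        + (p * p * (∑' h, ∫⁻ ω, W h ω * R ω ∂Pr)
          + (p * p * (∑' h, ∫⁻ ω, W h ω * R ω ∂Pr)
            + p * p * ∫⁻ ω, R ω * R ω ∂Pr))
      = p * p * ((∑' h, ∑' k, ∫⁻ ω, W h ω * W k ω ∂Pr)
          + ((∑' h, ∫⁻ ω, W h ω * R ω ∂Pr)
            + ((∑' h, ∫⁻ ω, W h ω * R ω ∂Pr) + ∫⁻ ω, R ω * R ω ∂Pr)))
        + (p - p * p) * (∑' h, ∫⁻ ω, W h ω * W h ω ∂Pr) := by ring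
    _ = p * p + (p - p * p) * ∑' h, ∫⁻ ω, W h ω * W h ω ∂Pr := by rw [hTUV, mul_one]


/-- For a multivariate species sampling process, the mean of `P j (A)` equals
`P₀ A` and its variance equals the within-group tie probability times `P₀ A (1 - P₀ A)`. -/
theorem mSSP_mean_var {Ω : Type*} [MeasurableSpace Ω] {𝕏 : Type*} [MeasurableSpace 𝕏]
    [StandardBorelSpace 𝕏] {ι : Type*}
    (Pr : Measure Ω) [IsProbabilityMeasure Pr]
    (P₀ : Measure 𝕏) [IsProbabilityMeasure P₀] [NullSingletonClass P₀]
    (P : ι → Ω → Measure 𝕏) (hP : IsMSSP Pr P₀ P)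
    (X : ι → ℕ → Ω → 𝕏) (hX : IsSample Pr P X)
    (j : ι) (A : Set 𝕏) (hA : MeasurableSet A) :
    (∫⁻ ω, P j ω A ∂Pr) = P₀ A ∧
    variance (fun ω => (P j ω A).toReal) Pr
      = (Pr {ω | X j 0 ω = X j 1 ω}).toReal * (P₀ A).toReal * (1 - (P₀ A).toReal) := by
  classical
  obtain ⟨π, θ, hM⟩ := hP
  set p : ℝ≥0∞ := P₀ A with hp
  have hp1 : p ≤ 1 := prob_le_one
  have hpt : p ≠ ∞ := (hp1.trans_lt ENNReal.one_lt_top).ne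
  have hpp : p * p ≤ p := by
    calc p * p ≤ 1 * p := by gcongr
      _ = p := one_mul p
  -- measurability of basic blocks
  have mW : ∀ h, Measurable (fun ω => ENNReal.ofReal (π j h ω)) :=
    fun h => ENNReal.measurable_ofReal.comp (hM.measπ j h)
  have mSW : Measurable (fun ω => ∑' h, ENNReal.ofReal (π j h ω)) :=
    Measurable.ennreal_tsum mW
  have mR : Measurable (fun ω => 1 - ∑' h, ENNReal.ofReal (π j h ω)) :=
    measurable_const.sub mSW
  have mdA : ∀ h, Measurable (fun ω => A.indicator (fun _ => (1:ℝ≥0∞)) (θ h ω)) :=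
    fun h => (measurable_const.indicator hA).comp (hM.measθ h)
  have hθv : Measurable fun ω (h : ℕ) => θ h ω := measurable_pi_lambda _ hM.measθ
  have hπa : Measurable fun ω (j' : ι) (h : ℕ) => π j' h ω :=
    measurable_pi_lambda _ fun j' => measurable_pi_lambda _ fun h => hM.measπ j' h
  -- the independence workhorse
  have hkey : ∀ (g : (ℕ → 𝕏) → ℝ≥0∞) (f : (ι → ℕ → ℝ) → ℝ≥0∞), Measurable g → Measurable f →
      ∫⁻ ω, g (fun h => θ h ω) * f (fun j' h => π j' h ω) ∂Pr
        = (∫⁻ ω, g (fun h => θ h ω) ∂Pr) * ∫⁻ ω, f (fun j' h => π j' h ω) ∂Pr := by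
    intro g f hg hf
    exact lintegral_mul_eq_lintegral_mul_lintegral_of_indepFun''
      (hg.comp hθv).aemeasurable (hf.comp hπa).aemeasurable (hM.indepθπ.comp hg hf)
  -- integrals of the indicator blocks
  have hdA_int : ∀ h, ∫⁻ ω, A.indicator (fun _ => (1:ℝ≥0∞)) (θ h ω) ∂Pr = p := by
    intro h
    rw [lintegral_indicator_const_comp (hM.measθ h) hA, one_mul,
      ← Measure.map_apply (hM.measθ h) hA, hM.lawθ h]
  have hdd : ∀ h k, ∫⁻ ω, A.indicator (fun _ => (1:ℝ≥0∞)) (θ h ω)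
      * A.indicator (fun _ => (1:ℝ≥0∞)) (θ k ω) ∂Pr = if h = k then p else p * p := by
    intro h k
    by_cases hhk : h = k
    · subst hhk
      rw [if_pos rfl, ← hdA_int h]
      refine lintegral_congr fun ω => ?_
      by_cases hmem : θ h ω ∈ A <;> simp [Set.indicator, hmem]
    · rw [if_neg hhk]
      have hind : IndepFun (fun ω => A.indicator (fun _ => (1:ℝ≥0∞)) (θ h ω))
          (fun ω => A.indicator (fun _ => (1:ℝ≥0∞)) (θ k ω)) Pr :=
        (hM.iidθ.indepFun hhk).comp (measurable_const.indicator hA)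
          (measurable_const.indicator hA)
      rw [lintegral_mul_eq_lintegral_mul_lintegral_of_indepFun'' (mdA h).aemeasurable
        (mdA k).aemeasurable hind, hdA_int h, hdA_int k]
  -- diagonal
  have hdiag : MeasurableSet {x : 𝕏 × 𝕏 | x.1 = x.2} := by
    letI := upgradeStandardBorel 𝕏
    exact isClosed_diagonal.measurableSet
  have hP₀diag : (P₀.prod P₀) {x : 𝕏 × 𝕏 | x.1 = x.2} = 0 := by
    rw [Measure.prod_apply hdiag]
    have h0 : ∀ x : 𝕏, P₀ (Prod.mk x ⁻¹' {q : 𝕏 × 𝕏 | q.1 = q.2}) = 0 := by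
      intro x
      have : (Prod.mk x ⁻¹' {q : 𝕏 × 𝕏 | q.1 = q.2}) = {x} := by
        ext y; simp [eq_comm]
      rw [this, measure_singleton]
    simp [h0]
  have hdist : ∀ᵐ ω ∂Pr, ∀ h k, h ≠ k → θ h ω ≠ θ k ω := by
    rw [ae_all_iff]
    intro h
    rw [ae_all_iff]
    intro k
    by_cases hhk : h = k
    · exact ae_of_all _ fun ω hne => absurd hhk hne
    · have hmap : Measure.map (fun ω => (θ h ω, θ k ω)) Pr = P₀.prod P₀ := by
        rw [(indepFun_iff_map_prod_eq_prod_map_map (hM.measθ h).aemeasurable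
          (hM.measθ k).aemeasurable).1 (hM.iidθ.indepFun hhk), hM.lawθ h, hM.lawθ k]
      have h0 : Pr {ω | θ h ω = θ k ω} = 0 := by
        have : Pr ((fun ω => (θ h ω, θ k ω)) ⁻¹' {x : 𝕏 × 𝕏 | x.1 = x.2}) = 0 := by
          rw [← Measure.map_apply ((hM.measθ h).prodMk (hM.measθ k)) hdiag, hmap, hP₀diag]
        exact this
      have hae : ∀ᵐ ω ∂Pr, ¬ θ h ω = θ k ω := by
        rw [ae_iff]
        simpa using h0
      filter_upwards [hae] with ω hω _
      exact hω
  -- normalization facts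
  have hrepr := hM.repr j
  have haeCN : ∀ᵐ ω ∂Pr,
      ENNReal.ofReal (1 - ∑' h, π j h ω) = 1 - ∑' h, ENNReal.ofReal (π j h ω) ∧
      (∑' h, ENNReal.ofReal (π j h ω)) + (1 - ∑' h, ENNReal.ofReal (π j h ω)) = 1 := by
    filter_upwards [hrepr] with ω hω
    have hu : P j ω Set.univ = 1 := (hM.probP j ω).measure_univ
    rw [hω, mixM_apply _ _ _ MeasurableSet.univ] at hu
    simp only [Set.indicator_univ, mul_one, measure_univ] at hu
    have hle : (∑' h, ENNReal.ofReal (π j h ω)) ≤ 1 := by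
      rw [← hu]; exact le_self_add
    have hC : ENNReal.ofReal (1 - ∑' h, π j h ω)
        = 1 - ∑' h, ENNReal.ofReal (π j h ω) :=
      ENNReal.eq_sub_of_add_eq (hle.trans_lt ENNReal.one_lt_top).ne (by rw [add_comm]; exact hu)
    exact ⟨hC, add_tsub_cancel_of_le hle⟩
  -- a.e. representation on A
  have haeA : ∀ᵐ ω ∂Pr, P j ω A
      = (∑' h, ENNReal.ofReal (π j h ω) * A.indicator (fun _ => (1:ℝ≥0∞)) (θ h ω))
        + (1 - ∑' h, ENNReal.ofReal (π j h ω)) * p := by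
    filter_upwards [hrepr, haeCN] with ω hω hcn
    rw [hω, mixM_apply _ _ _ hA, hcn.1, hp]
  -- one fact: total expectation of weights is 1
  have hone : (∑' h, ∫⁻ ω, ENNReal.ofReal (π j h ω) ∂Pr)
      + ∫⁻ ω, (1 - ∑' k, ENNReal.ofReal (π j k ω)) ∂Pr = 1 := by
    rw [← lintegral_tsum fun h => (mW h).aemeasurable, ← lintegral_add_left mSW]
    have : ∫⁻ ω, ((∑' h, ENNReal.ofReal (π j h ω))
        + (1 - ∑' h, ENNReal.ofReal (π j h ω))) ∂Pr = ∫⁻ _, 1 ∂Pr :=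
      lintegral_congr_ae (by filter_upwards [haeCN] with ω hω; exact hω.2)
    rw [this, lintegral_one, measure_univ]
  -- product with indicator: factorization
  have hWdA : ∀ h, ∫⁻ ω, ENNReal.ofReal (π j h ω)
      * A.indicator (fun _ => (1:ℝ≥0∞)) (θ h ω) ∂Pr
      = p * ∫⁻ ω, ENNReal.ofReal (π j h ω) ∂Pr := by
    intro h
    have := hkey (fun t => A.indicator (fun _ => (1:ℝ≥0∞)) (t h))
      (fun a => ENNReal.ofReal (a j h))
      ((measurable_const.indicator hA).comp (measurable_pi_apply h))
      (ENNReal.measurable_ofReal.comp ((measurable_pi_apply h).comp (measurable_pi_apply j)))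
    calc ∫⁻ ω, ENNReal.ofReal (π j h ω) * A.indicator (fun _ => (1:ℝ≥0∞)) (θ h ω) ∂Pr
        = ∫⁻ ω, A.indicator (fun _ => (1:ℝ≥0∞)) (θ h ω) * ENNReal.ofReal (π j h ω) ∂Pr :=
          lintegral_congr fun ω => mul_comm _ _
      _ = (∫⁻ ω, A.indicator (fun _ => (1:ℝ≥0∞)) (θ h ω) ∂Pr)
            * ∫⁻ ω, ENNReal.ofReal (π j h ω) ∂Pr := this
      _ = p * ∫⁻ ω, ENNReal.ofReal (π j h ω) ∂Pr := by rw [hdA_int h]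
  -- THE MEAN
  have hmean : ∫⁻ ω, P j ω A ∂Pr = p := by
    calc ∫⁻ ω, P j ω A ∂Pr
        = ∫⁻ ω, ((∑' h, ENNReal.ofReal (π j h ω) * A.indicator (fun _ => (1:ℝ≥0∞)) (θ h ω))
            + (1 - ∑' h, ENNReal.ofReal (π j h ω)) * p) ∂Pr := lintegral_congr_ae haeA
      _ = (∫⁻ ω, ∑' h, ENNReal.ofReal (π j h ω)
            * A.indicator (fun _ => (1:ℝ≥0∞)) (θ h ω) ∂Pr)
          + ∫⁻ ω, (1 - ∑' h, ENNReal.ofReal (π j h ω)) * p ∂Pr :=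
          lintegral_add_left (Measurable.ennreal_tsum fun h => (mW h).mul (mdA h)) _
      _ = (∑' h, ∫⁻ ω, ENNReal.ofReal (π j h ω)
            * A.indicator (fun _ => (1:ℝ≥0∞)) (θ h ω) ∂Pr)
          + (∫⁻ ω, (1 - ∑' h, ENNReal.ofReal (π j h ω)) ∂Pr) * p := by
          rw [lintegral_tsum fun h => ((mW h).fun_mul (mdA h)).aemeasurable,
            lintegral_mul_const p mR]
      _ = (∑' h, p * ∫⁻ ω, ENNReal.ofReal (π j h ω) ∂Pr)
          + (∫⁻ ω, (1 - ∑' h, ENNReal.ofReal (π j h ω)) ∂Pr) * p := by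
          rw [tsum_congr hWdA]
      _ = p * ((∑' h, ∫⁻ ω, ENNReal.ofReal (π j h ω) ∂Pr)
          + ∫⁻ ω, (1 - ∑' k, ENNReal.ofReal (π j k ω)) ∂Pr) := by
          rw [ENNReal.tsum_mul_left]; ring
      _ = p := by rw [hone, mul_one]
  -- tie probability: the diagonal mass of the product измерение
  have haeDiag : ∀ᵐ ω ∂Pr, ((P j ω).prod (P j ω)) {x : 𝕏 × 𝕏 | x.1 = x.2}
      = ∑' h, ENNReal.ofReal (π j h ω) * ENNReal.ofReal (π j h ω) := by
    filter_upwards [hrepr, hdist] with ω hω hd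
    haveI := hM.probP j ω
    have hFmeas : Measurable fun x => ∑' h, ENNReal.ofReal (π j h ω)
        * ({θ h ω} : Set 𝕏).indicator (fun _ => (1:ℝ≥0∞)) x :=
      Measurable.ennreal_tsum fun h =>
        (measurable_const.indicator (measurableSet_singleton _)).const_mul _
    have hFx : ∀ x, P j ω {x} = ∑' h, ENNReal.ofReal (π j h ω)
        * ({θ h ω} : Set 𝕏).indicator (fun _ => (1:ℝ≥0∞)) x := by
      intro x
      rw [hω, mixM_apply _ _ _ (measurableSet_singleton x), measure_singleton,
        mul_zero, add_zero]
      refine tsum_congr fun h => ?_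
      congr 1
      by_cases hxh : x = θ h ω
      · simp [Set.indicator, hxh]
      · have h1 : θ h ω ∉ ({x} : Set 𝕏) := fun e => hxh (Set.mem_singleton_iff.1 e).symm
        have h2 : x ∉ ({θ h ω} : Set 𝕏) := fun e => hxh (Set.mem_singleton_iff.1 e)
        rw [Set.indicator_of_notMem h1, Set.indicator_of_notMem h2]
    have hsing : ∀ x : 𝕏, Prod.mk x ⁻¹' {q : 𝕏 × 𝕏 | q.1 = q.2} = {x} := by
      intro x; ext y; simp [eq_comm]
    rw [Measure.prod_apply hdiag]
    calc ∫⁻ x, P j ω (Prod.mk x ⁻¹' {q : 𝕏 × 𝕏 | q.1 = q.2}) ∂(P j ω)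
        = ∫⁻ x, ∑' h, ENNReal.ofReal (π j h ω)
            * ({θ h ω} : Set 𝕏).indicator (fun _ => (1:ℝ≥0∞)) x ∂(P j ω) := by
          refine lintegral_congr fun x => ?_
          rw [hsing x, hFx x]
      _ = ∑' h, ENNReal.ofReal (π j h ω) * ENNReal.ofReal (π j h ω) := by
          rw [hω, mixM, lintegral_add_measure, lintegral_sum_measure]
          have hF0 : ∫⁻ x, ∑' h, ENNReal.ofReal (π j h ω)
              * ({θ h ω} : Set 𝕏).indicator (fun _ => (1:ℝ≥0∞)) x ∂P₀ = 0 := by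
            rw [lintegral_tsum fun h =>
              ((measurable_const.indicator (measurableSet_singleton _)).const_mul _).aemeasurable]
            have : ∀ h : ℕ, ∫⁻ x, ENNReal.ofReal (π j h ω)
                * ({θ h ω} : Set 𝕏).indicator (fun _ => (1:ℝ≥0∞)) x ∂P₀ = 0 := by
              intro h
              rw [lintegral_const_mul _ (measurable_const.indicator (measurableSet_singleton _)),
                lintegral_indicator_const (measurableSet_singleton (θ h ω))]
              simp
            simp only [this, tsum_zero]
          rw [lintegral_smul_measure, hF0, smul_zero, add_zero]
          refine tsum_congr fun k => ?_
          rw [lintegral_smul_measure, lintegral_dirac' _ hFmeas, smul_eq_mul]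
          congr 1
          refine (tsum_eq_single k fun h hk => ?_).trans ?_
          · have : θ k ω ∉ ({θ h ω} : Set 𝕏) := by
              simp only [Set.mem_singleton_iff]
              exact fun e => (hd h k hk) e.symm
            simp [Set.indicator, this]
          · simp [Set.indicator]
  -- abbreviate the tie value
  set ρ : ℝ≥0∞ := ∑' h, ∫⁻ ω, ENNReal.ofReal (π j h ω) * ENNReal.ofReal (π j h ω) ∂Pr with hρ
  have htie : Pr {ω | X j 0 ω = X j 1 ω} = ρ := by
    have hpl := pair_law Pr P hM.measP hM.probP X hX j hdiag
    have hseteq : {ω | X j 0 ω = X j 1 ω}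
        = (fun ω => (X j 0 ω, X j 1 ω)) ⁻¹' {x : 𝕏 × 𝕏 | x.1 = x.2} := rfl
    rw [hseteq, hpl.2, lintegral_congr_ae haeDiag,
      lintegral_tsum fun h => ((mW h).fun_mul (mW h)).aemeasurable]
  have hρ1 : ρ ≤ 1 := by rw [← htie]; exact prob_le_one
  have hρt : ρ ≠ ∞ := (hρ1.trans_lt ENNReal.one_lt_top).ne
  -- SECOND MOMENT
  have hsq : ∫⁻ ω, P j ω A * P j ω A ∂Pr = p * p + (p - p * p) * ρ := by
    have hDW : ∀ h k, ∫⁻ ω, (A.indicator (fun _ => (1:ℝ≥0∞)) (θ h ω)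
          * A.indicator (fun _ => (1:ℝ≥0∞)) (θ k ω))
          * (ENNReal.ofReal (π j h ω) * ENNReal.ofReal (π j k ω)) ∂Pr
        = (if h = k then p else p * p)
          * ∫⁻ ω, ENNReal.ofReal (π j h ω) * ENNReal.ofReal (π j k ω) ∂Pr := by
      intro h k
      have h1 := hkey
        (fun t => A.indicator (fun _ => (1:ℝ≥0∞)) (t h) * A.indicator (fun _ => (1:ℝ≥0∞)) (t k))
        (fun a => ENNReal.ofReal (a j h) * ENNReal.ofReal (a j k))
        (((measurable_const.indicator hA).comp (measurable_pi_apply h)).mul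
          ((measurable_const.indicator hA).comp (measurable_pi_apply k)))
        ((ENNReal.measurable_ofReal.comp ((measurable_pi_apply h).comp (measurable_pi_apply j))).mul
          (ENNReal.measurable_ofReal.comp ((measurable_pi_apply k).comp (measurable_pi_apply j))))
      calc ∫⁻ ω, (A.indicator (fun _ => (1:ℝ≥0∞)) (θ h ω)
              * A.indicator (fun _ => (1:ℝ≥0∞)) (θ k ω))
              * (ENNReal.ofReal (π j h ω) * ENNReal.ofReal (π j k ω)) ∂Pr
          = (∫⁻ ω, A.indicator (fun _ => (1:ℝ≥0∞)) (θ h ω)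
              * A.indicator (fun _ => (1:ℝ≥0∞)) (θ k ω) ∂Pr)
            * ∫⁻ ω, ENNReal.ofReal (π j h ω) * ENNReal.ofReal (π j k ω) ∂Pr := h1
        _ = (if h = k then p else p * p)
            * ∫⁻ ω, ENNReal.ofReal (π j h ω) * ENNReal.ofReal (π j k ω) ∂Pr := by
            rw [hdd h k]
    have hDWR : ∀ h, ∫⁻ ω, A.indicator (fun _ => (1:ℝ≥0∞)) (θ h ω)
          * (ENNReal.ofReal (π j h ω) * (1 - ∑' i, ENNReal.ofReal (π j i ω))) ∂Pr
        = p * ∫⁻ ω, ENNReal.ofReal (π j h ω) * (1 - ∑' i, ENNReal.ofReal (π j i ω)) ∂Pr := by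
      intro h
      have h1 := hkey
        (fun t => A.indicator (fun _ => (1:ℝ≥0∞)) (t h))
        (fun a => ENNReal.ofReal (a j h) * (1 - ∑' i, ENNReal.ofReal (a j i)))
        ((measurable_const.indicator hA).comp (measurable_pi_apply h))
        ((ENNReal.measurable_ofReal.comp ((measurable_pi_apply h).comp (measurable_pi_apply j))).mul
          (measurable_const.sub (Measurable.ennreal_tsum fun i =>
            ENNReal.measurable_ofReal.comp ((measurable_pi_apply i).comp (measurable_pi_apply j)))))
      calc ∫⁻ ω, A.indicator (fun _ => (1:ℝ≥0∞)) (θ h ω)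
              * (ENNReal.ofReal (π j h ω) * (1 - ∑' i, ENNReal.ofReal (π j i ω))) ∂Pr
          = (∫⁻ ω, A.indicator (fun _ => (1:ℝ≥0∞)) (θ h ω) ∂Pr)
            * ∫⁻ ω, ENNReal.ofReal (π j h ω) * (1 - ∑' i, ENNReal.ofReal (π j i ω)) ∂Pr := h1
        _ = p * ∫⁻ ω, ENNReal.ofReal (π j h ω)
            * (1 - ∑' i, ENNReal.ofReal (π j i ω)) ∂Pr := by rw [hdA_int h]
    have hae2 : (fun ω => P j ω A * P j ω A) =ᵐ[Pr] fun ω =>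
        ((∑' h, ENNReal.ofReal (π j h ω) * A.indicator (fun _ => (1:ℝ≥0∞)) (θ h ω))
          + (1 - ∑' h, ENNReal.ofReal (π j h ω)) * p)
        * ((∑' h, ENNReal.ofReal (π j h ω) * A.indicator (fun _ => (1:ℝ≥0∞)) (θ h ω))
          + (1 - ∑' h, ENNReal.ofReal (π j h ω)) * p) := by
      filter_upwards [haeA] with ω hω
      rw [hω]
    rw [lintegral_congr_ae hae2, hρ]
    exact second_moment Pr (fun h ω => ENNReal.ofReal (π j h ω))
      (fun ω => 1 - ∑' i, ENNReal.ofReal (π j i ω))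
      (fun h ω => A.indicator (fun _ => (1:ℝ≥0∞)) (θ h ω)) p mW mR mdA hpp hDW hDWR
      (by filter_upwards [haeCN] with ω hω; exact hω.2)
  -- FINAL ASSEMBLY
  refine ⟨hmean, ?_⟩
  have hPAlt : ∀ ω, P j ω A < ∞ := fun ω => haveI := hM.probP j ω;
    prob_le_one.trans_lt ENNReal.one_lt_top
  have hmf : Measurable fun ω => (P j ω A).toReal := (hM.measP j A hA).ennreal_toReal
  have hmem : MemLp (fun ω => (P j ω A).toReal) 2 Pr := by
    refine (memLp_top_of_bound hmf.aestronglyMeasurable 1 (ae_of_all _ fun ω => ?_)).mono_exponent le_top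
    rw [Real.norm_eq_abs, abs_of_nonneg ENNReal.toReal_nonneg]
    haveI := hM.probP j ω
    calc (P j ω A).toReal ≤ (1 : ℝ≥0∞).toReal :=
        ENNReal.toReal_mono (by simp) prob_le_one
      _ = 1 := by simp
  rw [variance_eq_sub hmem]
  have h1 : Pr[fun ω => (P j ω A).toReal] = p.toReal := by
    rw [integral_toReal (hM.measP j A hA).aemeasurable (ae_of_all _ hPAlt), hmean]
  have h2 : Pr[(fun ω => (P j ω A).toReal) ^ 2] = (p * p + (p - p * p) * ρ).toReal := by
    have hfun : ((fun ω => (P j ω A).toReal) ^ 2) = fun ω => (P j ω A * P j ω A).toReal := by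
      funext ω
      simp [pow_two, ENNReal.toReal_mul]
    rw [hfun, integral_toReal ((hM.measP j A hA).fun_mul (hM.measP j A hA)).aemeasurable
      (ae_of_all _ fun ω => ENNReal.mul_lt_top (hPAlt ω) (hPAlt ω)), hsq]
  rw [h1, h2, htie]
  have hto : (p * p + (p - p * p) * ρ).toReal
      = p.toReal * p.toReal + (p.toReal - p.toReal * p.toReal) * ρ.toReal := by
    rw [ENNReal.toReal_add (by finiteness) (by finiteness), ENNReal.toReal_mul,
      ENNReal.toReal_mul, ENNReal.toReal_sub_of_le hpp hpt, ENNReal.toReal_mul]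
  rw [hto]
  ring
end MSSP
end

section
/- Let (P₁,…,P_J) be a multivariate species sampling process with non-atomic base measure P₀ and let X be a sample from (P₁,…,P_J). Fix group sizes I₁,…,I_J with n = Σ_j I_j, let Π_n be the random partition induced by the ties of (X_{j,i} : i ≤ I_j, j ≤ J), and fix a partition configuration with D blocks and group counts (n_{j,d}) having ℙ(Π_n = this configuration) > 0; write X*₁,…,X*_D for the distinct observed values listed in order of arrival by group. Then for every group j: (a) for each l ≤ D, ℙ(X_{j,I_j+1} = X*_l | Π_n = the given configuration) = pEPPF_D^{(n+1)}(n₁,…,[n_{j,1},…,n_{j,l}+1,…,n_{j,D}],…,n_J) / pEPPF_D^{(n)}(n₁,…,n_J); and (b) ℙ(X_{j,I_j+1} ∉ {X*₁,…,X*_D} | Π_n = the given configuration) = pEPPF_{D+1}^{(n+1)}([n₁,0],…,[n_{j,1},…,n_{j,D},1],…,[n_J,0]) / pEPPF_D^{(n)}(n₁,…,n_J). -/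
open MeasureTheory ProbabilityTheory
open scoped ENNReal

namespace MSSP

variable {Ω : Type*} [MeasurableSpace Ω] {𝕏 : Type*} [MeasurableSpace 𝕏]

/-- The partially exchangeable partition probability function of a vector `P` of random
probability measures, for group sizes `I` and the partition of the labels
`Σ j, Fin (I j)` encoded by the block-assignment map `c`: it is the expected probability, under
the conditional product law of the sample, that the observations are equal exactly according
to the blocks of `c` (i.e. `E[∫_{𝕏^D_*} ∏_d ∏_j P_j(dx_d)^{n_{j,d}}]`). -/
noncomputable def pEPPF {J : ℕ} (Pr : Measure Ω) (P : Fin J → Ω → Measure 𝕏)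
    {I : Fin J → ℕ} {D : ℕ} (c : (Σ j, Fin (I j)) → Fin D) : ℝ≥0∞ :=
  ∫⁻ ω, Measure.pi (fun l : Σ j, Fin (I j) => P l.1 ω)
      {x | ∀ a b : Σ j, Fin (I j), x a = x b ↔ c a = c b} ∂Pr

/-- Extension of a block assignment `c` after one more observation in group `j`, the new
observation being assigned to the existing block `l`. -/
def extOld {J : ℕ} (I : Fin J → ℕ) (j : Fin J) {D : ℕ}
    (c : (Σ j', Fin (I j')) → Fin D) (l : Fin D) :
    (Σ j', Fin (Function.update I j (I j + 1) j')) → Fin D :=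
  fun p => if h : (p.2 : ℕ) < I p.1 then c ⟨p.1, ⟨p.2, h⟩⟩ else l

/-- Extension of a block assignment `c` after one more observation in group `j`, the new
observation being assigned to a brand new block. -/
def extNew {J : ℕ} (I : Fin J → ℕ) (j : Fin J) {D : ℕ}
    (c : (Σ j', Fin (I j')) → Fin D) :
    (Σ j', Fin (Function.update I j (I j + 1) j')) → Fin (D + 1) :=
  fun p => if h : (p.2 : ℕ) < I p.1 then Fin.castSucc (c ⟨p.1, ⟨p.2, h⟩⟩) else Fin.last D

/-- The event that the first `I j` observations of each group are equal exactly according to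
the block assignment `c`. -/
def tieEvent {J : ℕ} {I : Fin J → ℕ} {D : ℕ} (X : Fin J → ℕ → Ω → 𝕏)
    (c : (Σ j', Fin (I j')) → Fin D) : Set Ω :=
  {ω | ∀ a b : Σ j', Fin (I j'), (X a.1 a.2.val ω = X b.1 b.2.val ω ↔ c a = c b)}

/-! ### Auxiliary lemmas -/

lemma measurable_piSet {κ : Type*} [Fintype κ]
    (ν : κ → Ω → Measure 𝕏) (hprob : ∀ k ω, IsProbabilityMeasure (ν k ω))
    (hmeas : ∀ k (A : Set 𝕏), MeasurableSet A → Measurable fun ω => ν k ω A)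
    {B : Set (κ → 𝕏)} (hB : MeasurableSet B) :
    Measurable fun ω => Measure.pi (fun k => ν k ω) B := by
  refine MeasurableSpace.induction_on_inter
    (C := fun B _ => Measurable fun ω => Measure.pi (fun k => ν k ω) B)
    generateFrom_pi.symm isPiSystem_pi ?_ ?_ ?_ ?_ _ hB
  · simp only [measure_empty]; exact measurable_const
  · rintro _ ⟨A, hA, rfl⟩
    have h : (fun ω => Measure.pi (fun k => ν k ω) (Set.pi Set.univ A))
        = fun ω => ∏ k, ν k ω (A k) := by
      funext ω
      haveI := fun k => hprob k ω
      exact Measure.pi_pi _ _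
    rw [h]
    exact Finset.measurable_prod _ fun k _ => hmeas k _ (hA k (Set.mem_univ k))
  · intro t ht hC
    have h : (fun ω => Measure.pi (fun k => ν k ω) tᶜ)
        = fun ω => 1 - Measure.pi (fun k => ν k ω) t := by
      funext ω
      haveI := fun k => hprob k ω
      rw [measure_compl ht (measure_ne_top _ _), measure_univ]
    rw [h]
    exact measurable_const.sub hC
  · intro f hd hm hC
    have h : (fun ω => Measure.pi (fun k => ν k ω) (⋃ i, f i))
        = fun ω => ∑' i, Measure.pi (fun k => ν k ω) (f i) := by
      funext ω; exact measure_iUnion hd hm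
    rw [h]
    exact Measurable.ennreal_tsum hC

lemma sample_law {J : ℕ} {Pr : Measure Ω} [IsProbabilityMeasure Pr]
    {P : Fin J → Ω → Measure 𝕏}
    (hprob : ∀ j ω, IsProbabilityMeasure (P j ω))
    (hmeas : ∀ j (A : Set 𝕏), MeasurableSet A → Measurable fun ω => P j ω A)
    {X : Fin J → ℕ → Ω → 𝕏} (hX : IsSample Pr P X) (I : Fin J → ℕ)
    {B : Set ((Σ j, Fin (I j)) → 𝕏)} (hB : MeasurableSet B) :
    Pr ((fun ω (a : Σ j, Fin (I j)) => X a.1 a.2.val ω) ⁻¹' B)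
      = ∫⁻ ω, Measure.pi (fun a : Σ j, Fin (I j) => P a.1 ω) B ∂Pr := by
  have hXm : Measurable (fun ω (a : Σ j, Fin (I j)) => X a.1 a.2.val ω) :=
    measurable_pi_lambda _ fun a => hX.1 a.1 a.2.val
  refine MeasurableSpace.induction_on_inter
    (C := fun B _ => Pr ((fun ω (a : Σ j, Fin (I j)) => X a.1 a.2.val ω) ⁻¹' B)
      = ∫⁻ ω, Measure.pi (fun a : Σ j, Fin (I j) => P a.1 ω) B ∂Pr)
    generateFrom_pi.symm isPiSystem_pi ?_ ?_ ?_ ?_ _ hB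
  · simp
  · rintro _ ⟨A, hA, rfl⟩
    classical
    set f : (Σ j, Fin (I j)) → Fin J × ℕ := fun a => (a.1, a.2.val) with hf
    have hfinj : Function.Injective f := by
      rintro ⟨j1, i1⟩ ⟨j2, i2⟩ h
      simp only [f, Prod.mk.injEq] at h
      obtain ⟨h1, h2⟩ := h
      subst h1
      simp [Fin.ext h2]
    set A' : Fin J × ℕ → Set 𝕏 :=
      fun p => if h : p.2 < I p.1 then A ⟨p.1, ⟨p.2, h⟩⟩ else Set.univ with hA'
    have hA'f : ∀ a : Σ j, Fin (I j), A' (f a) = A a := fun a => dif_pos a.2.isLt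
    have hA'm : ∀ p ∈ Finset.univ.image f, MeasurableSet (A' p) := by
      intro p _
      simp only [A']
      split
      · exact hA _ (Set.mem_univ _)
      · exact MeasurableSet.univ
    have key := hX.2 (Finset.univ.image f) A' hA'm
    have hset : {ω | ∀ p ∈ Finset.univ.image f, X p.1 p.2 ω ∈ A' p}
        = (fun ω (a : Σ j, Fin (I j)) => X a.1 a.2.val ω) ⁻¹' (Set.pi Set.univ A) := by
      ext ω
      simp only [Set.mem_setOf_eq, Finset.mem_image, Finset.mem_univ, true_and,
        Set.mem_preimage, Set.mem_pi, Set.mem_univ, forall_true_left]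
      constructor
      · intro h a
        have := h (f a) ⟨a, rfl⟩
        rwa [hA'f] at this
      · rintro h p ⟨a, rfl⟩
        rw [hA'f]
        exact h a
    have hprod : ∀ ω, (∏ p ∈ Finset.univ.image f, P p.1 ω (A' p))
        = Measure.pi (fun a : Σ j, Fin (I j) => P a.1 ω) (Set.pi Set.univ A) := by
      intro ω
      haveI := fun a : Σ j, Fin (I j) => hprob a.1 ω
      rw [Measure.pi_pi]
      rw [Finset.prod_image (fun a _ b _ h => hfinj h)]
      exact Finset.prod_congr rfl fun a _ => by rw [hA'f]
    rw [hset] at key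
    rw [key]
    exact lintegral_congr fun ω => hprod ω
  · intro t ht hC
    rw [Set.preimage_compl, measure_compl (hXm ht) (measure_ne_top _ _), measure_univ, hC]
    have hint : ∫⁻ ω, Measure.pi (fun a : Σ j, Fin (I j) => P a.1 ω) t ∂Pr ≠ ⊤ := by
      refine ne_of_lt (lt_of_le_of_lt (lintegral_mono fun ω => ?_)
        (by simp : (∫⁻ _, 1 ∂Pr) < ⊤))
      haveI := fun a : Σ j, Fin (I j) => hprob a.1 ω
      exact prob_le_one
    have hcompl : ∀ ω, Measure.pi (fun a : Σ j, Fin (I j) => P a.1 ω) tᶜ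
        = 1 - Measure.pi (fun a : Σ j, Fin (I j) => P a.1 ω) t := by
      intro ω
      haveI := fun a : Σ j, Fin (I j) => hprob a.1 ω
      rw [measure_compl ht (measure_ne_top _ _), measure_univ]
    calc 1 - ∫⁻ ω, Measure.pi (fun a : Σ j, Fin (I j) => P a.1 ω) t ∂Pr
        = ∫⁻ _, (1 : ℝ≥0∞) ∂Pr - ∫⁻ ω, Measure.pi (fun a : Σ j, Fin (I j) => P a.1 ω) t ∂Pr := by
          simp
      _ = ∫⁻ ω, (1 - Measure.pi (fun a : Σ j, Fin (I j) => P a.1 ω) t) ∂Pr := by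
          refine (lintegral_sub (measurable_piSet (fun a : Σ j, Fin (I j) => P a.1)
            (fun a ω => hprob a.1 ω) (fun a => hmeas a.1) ht) hint
            (Filter.Eventually.of_forall fun ω => ?_)).symm
          haveI := fun a : Σ j, Fin (I j) => hprob a.1 ω
          exact prob_le_one
      _ = ∫⁻ ω, Measure.pi (fun a : Σ j, Fin (I j) => P a.1 ω) tᶜ ∂Pr :=
          lintegral_congr fun ω => (hcompl ω).symm
  · intro g hd hm hC
    rw [Set.preimage_iUnion,
      measure_iUnion (fun i k hik => (hd hik).preimage _) (fun i => hXm (hm i))]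
    have h : ∀ ω, Measure.pi (fun a : Σ j, Fin (I j) => P a.1 ω) (⋃ i, g i)
        = ∑' i, Measure.pi (fun a : Σ j, Fin (I j) => P a.1 ω) (g i) :=
      fun ω => measure_iUnion hd hm
    rw [lintegral_congr h, lintegral_tsum fun i => (measurable_piSet
      (fun a : Σ j, Fin (I j) => P a.1) (fun a ω => hprob a.1 ω)
      (fun a => hmeas a.1) (hm i)).aemeasurable]
    exact tsum_congr fun i => hC i

lemma measurableSet_tieSet [StandardBorelSpace 𝕏] {κ : Type*} [Countable κ]
    {D : ℕ} (c : κ → Fin D) :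
    MeasurableSet {x : κ → 𝕏 | ∀ a b, x a = x b ↔ c a = c b} := by
  letI := upgradeStandardBorel 𝕏
  have heq : ∀ a b : κ, MeasurableSet {x : κ → 𝕏 | x a = x b} := fun a b =>
    (measurable_pi_apply a).stronglyMeasurable.measurableSet_eq_fun
      (measurable_pi_apply b).stronglyMeasurable
  have h : {x : κ → 𝕏 | ∀ a b, x a = x b ↔ c a = c b}
      = ⋂ a, ⋂ b, {x : κ → 𝕏 | x a = x b ↔ c a = c b} := by
    ext x; simp only [Set.mem_setOf_eq, Set.mem_iInter]
  rw [h]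
  refine MeasurableSet.iInter fun a => MeasurableSet.iInter fun b => ?_
  by_cases hc : c a = c b
  · simp only [hc, iff_true]
    exact heq a b
  · simp only [hc, iff_false]
    exact (heq a b).compl

/-- The multivariate generalized Chinese restaurant process: for a sample from
a multivariate species sampling process, conditionally on the observed partition configuration
(given by a surjective block assignment `c` with block representatives `r`), the next
observation from group `j` coincides with the `l`-th distinct observed value with probability
given by the ratio of the suitably updated pEPPF to the current pEPPF, and it is a new value
with probability the corresponding ratio where the updated pEPPF gains a new block. -/
theorem mSSP_predictive_mgCRP {Ω : Type*} [MeasurableSpace Ω] {𝕏 : Type*} [MeasurableSpace 𝕏]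
    [StandardBorelSpace 𝕏] {J : ℕ}
    (Pr : Measure Ω) [IsProbabilityMeasure Pr]
    (P₀ : Measure 𝕏) [IsProbabilityMeasure P₀] [NullSingletonClass P₀]
    (P : Fin J → Ω → Measure 𝕏) (hP : IsMSSP Pr P₀ P)
    (X : Fin J → ℕ → Ω → 𝕏) (hX : IsSample Pr P X)
    (I : Fin J → ℕ) (D : ℕ) (c : (Σ j', Fin (I j')) → Fin D)
    (hc : Function.Surjective c)
    (r : Fin D → Σ j', Fin (I j')) (hr : ∀ d, c (r d) = d)
    (hpos : Pr (tieEvent X c) ≠ 0)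
    (j : Fin J) :
    (∀ l : Fin D,
      Pr[|tieEvent X c] {ω | X j (I j) ω = X (r l).1 (r l).2.val ω}
        = pEPPF Pr P (extOld I j c l) / pEPPF Pr P c) ∧
    Pr[|tieEvent X c] {ω | ∀ d : Fin D, X j (I j) ω ≠ X (r d).1 (r d).2.val ω}
      = pEPPF Pr P (extNew I j c) / pEPPF Pr P c := by
  classical
  obtain ⟨π, θ, hM⟩ := hP
  have hprob := hM.probP
  have hmeas := hM.measP
  have hle : ∀ j', I j' ≤ Function.update I j (I j + 1) j' := by
    intro j'
    rcases eq_or_ne j' j with rfl | h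
    · rw [Function.update_self]; exact Nat.le_succ _
    · rw [Function.update_of_ne h]
  have hIj : I j < Function.update I j (I j + 1) j := by
    rw [Function.update_self]; exact Nat.lt_succ_self _
  have hmemb : ∀ a : Σ j', Fin (I j'), (a.2 : ℕ) < Function.update I j (I j + 1) a.1 :=
    fun a => lt_of_lt_of_le a.2.isLt (hle a.1)
  -- the law of the induced partition: Pr(tieEvent) = pEPPF
  have law : ∀ (D' : ℕ) (I0 : Fin J → ℕ) (c0 : (Σ j', Fin (I0 j')) → Fin D'),
      Pr (tieEvent X c0) = pEPPF Pr P c0 := fun D' I0 c0 =>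
    sample_law hprob hmeas hX I0 (measurableSet_tieSet (𝕏 := 𝕏) c0)
  have hEmeas : MeasurableSet (tieEvent X c) :=
    (measurable_pi_lambda _ fun a : Σ j', Fin (I j') => hX.1 a.1 a.2.val)
      (measurableSet_tieSet (𝕏 := 𝕏) c)
  -- evaluation of the extended assignments at old points and the new point
  have hOld_emb : ∀ (l0 : Fin D) (a : Σ j', Fin (I j')),
      extOld I j c l0 ⟨a.1, ⟨a.2.val, hmemb a⟩⟩ = c a := by
    rintro l0 ⟨j', i⟩; exact dif_pos i.isLt
  have hOld_new : ∀ l0 : Fin D, extOld I j c l0 ⟨j, ⟨I j, hIj⟩⟩ = l0 :=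
    fun l0 => dif_neg (lt_irrefl (I j))
  have hNew_emb : ∀ a : Σ j', Fin (I j'),
      extNew I j c ⟨a.1, ⟨a.2.val, hmemb a⟩⟩ = Fin.castSucc (c a) := by
    rintro ⟨j', i⟩; exact dif_pos i.isLt
  have hNew_new : extNew I j c ⟨j, ⟨I j, hIj⟩⟩ = Fin.last D :=
    dif_neg (lt_irrefl (I j))
  -- classification of extended indices
  have hcls : ∀ p : Σ j', Fin (Function.update I j (I j + 1) j'),
      (∃ a : Σ j', Fin (I j'), p.1 = a.1 ∧ (p.2 : ℕ) = (a.2 : ℕ) ∧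
        (∀ l0, extOld I j c l0 p = c a) ∧ extNew I j c p = Fin.castSucc (c a)) ∨
      (p.1 = j ∧ (p.2 : ℕ) = I j ∧
        (∀ l0, extOld I j c l0 p = l0) ∧ extNew I j c p = Fin.last D) := by
    rintro ⟨j', i⟩
    by_cases h : (i : ℕ) < I j'
    · exact Or.inl ⟨⟨j', ⟨i, h⟩⟩, rfl, rfl, fun l0 => dif_pos h, dif_pos h⟩
    · right
      rcases eq_or_ne j' j with rfl | hj
      · have hi : (i : ℕ) < I j' + 1 :=
          i.isLt.trans_le (le_of_eq (Function.update_self j' (I j' + 1) I))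
        have hival : (i : ℕ) = I j' := by omega
        exact ⟨rfl, hival, fun l0 => dif_neg h, dif_neg h⟩
      · exact absurd (i.isLt.trans_le
          (le_of_eq (Function.update_of_ne hj (I j + 1) I))) h
  constructor
  · intro l
    have hsetOld : tieEvent X c ∩ {ω | X j (I j) ω = X (r l).1 (r l).2.val ω}
        = tieEvent X (extOld I j c l) := by
      ext ω
      simp only [Set.mem_inter_iff, tieEvent, Set.mem_setOf_eq]
      constructor
      · rintro ⟨htie, heq⟩ p q
        rcases hcls p with ⟨a, ha1, ha2, ha3, -⟩ | ⟨hp1, hp2, hp3, -⟩ <;>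
          rcases hcls q with ⟨b, hb1, hb2, hb3, -⟩ | ⟨hq1, hq2, hq3, -⟩
        · rw [ha2, ha1, hb2, hb1, ha3 l, hb3 l]; exact htie a b
        · rw [ha2, ha1, hq2, hq1, ha3 l, hq3 l, heq]
          have h2 := htie a (r l)
          rw [hr l] at h2
          exact h2
        · rw [hp2, hp1, hb2, hb1, hp3 l, hb3 l, heq]
          have h2 := htie (r l) b
          rw [hr l] at h2
          exact h2
        · rw [hp2, hp1, hq2, hq1, hp3 l, hq3 l]; simp
      · intro h
        refine ⟨fun a b => ?_, ?_⟩
        · have := h ⟨a.1, ⟨a.2.val, hmemb a⟩⟩ ⟨b.1, ⟨b.2.val, hmemb b⟩⟩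
          rw [hOld_emb l a, hOld_emb l b] at this
          exact this
        · have := h ⟨j, ⟨I j, hIj⟩⟩ ⟨(r l).1, ⟨(r l).2.val, hmemb (r l)⟩⟩
          rw [hOld_new l, hOld_emb l (r l)] at this
          exact this.mpr (hr l).symm
    rw [cond_apply hEmeas Pr, hsetOld, law D (Function.update I j (I j + 1)) (extOld I j c l),
      law D I c, ENNReal.div_eq_inv_mul]
  · have hsetNew : tieEvent X c ∩ {ω | ∀ d : Fin D, X j (I j) ω ≠ X (r d).1 (r d).2.val ω}
        = tieEvent X (extNew I j c) := by
      ext ω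
      simp only [Set.mem_inter_iff, tieEvent, Set.mem_setOf_eq]
      constructor
      · rintro ⟨htie, hne⟩ p q
        rcases hcls p with ⟨a, ha1, ha2, -, ha4⟩ | ⟨hp1, hp2, -, hp4⟩ <;>
          rcases hcls q with ⟨b, hb1, hb2, -, hb4⟩ | ⟨hq1, hq2, -, hq4⟩
        · rw [ha2, ha1, hb2, hb1, ha4, hb4, Fin.castSucc_inj]; exact htie a b
        · rw [ha2, ha1, hq2, hq1, ha4, hq4]
          refine iff_of_false ?_ (Fin.castSucc_lt_last _).ne
          intro hx
          have h2 := (htie a (r (c a))).mpr (hr (c a)).symm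
          exact hne (c a) (hx.symm.trans h2)
        · rw [hp2, hp1, hb2, hb1, hp4, hb4]
          refine iff_of_false ?_ (Fin.castSucc_lt_last _).ne'
          intro hx
          have h2 := (htie b (r (c b))).mpr (hr (c b)).symm
          exact hne (c b) (hx.trans h2)
        · rw [hp2, hp1, hq2, hq1, hp4, hq4]; simp
      · intro h
        refine ⟨fun a b => ?_, fun d => ?_⟩
        · have := h ⟨a.1, ⟨a.2.val, hmemb a⟩⟩ ⟨b.1, ⟨b.2.val, hmemb b⟩⟩
          rw [hNew_emb a, hNew_emb b, Fin.castSucc_inj] at this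
          exact this
        · have := h ⟨j, ⟨I j, hIj⟩⟩ ⟨(r d).1, ⟨(r d).2.val, hmemb (r d)⟩⟩
          rw [hNew_new, hNew_emb (r d)] at this
          intro hx
          exact (Fin.castSucc_lt_last (c (r d))).ne' (this.mp hx)
    rw [cond_apply hEmeas Pr, hsetNew, law (D + 1) (Function.update I j (I j + 1)) (extNew I j c),
      law D I c, ENNReal.div_eq_inv_mul]


end MSSP
end
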